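/- arXiv:2108.08270 — 4 statements merged into one kernel-verified Lean document; each statement's English description precedes it below -/
import Mathlib

section
/- Let τ > 2 and let ξ ∈ ℝ be diophantine of order τ, i.e. there exists γ > 0 with |ξ − p/q| ≥ γ·q^{−τ} for all p ∈ ℤ, q ∈ ℕ. Let r = p₀/q₀ ∈ ℚ with q₀ ∈ ℕ, and set β = e^{2πiξ}, λ = e^{2πir}, λ ≠ 1. Then for every k ∈ ℕ, 1/|β^k − λ| ≤ (q₀^τ/(4γ))·k^{τ−1}. -/
open Real

lemma aux_abs_exp_sub_one (x : ℝ) :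
    ‖Complex.exp (2 * Real.pi * Complex.I * x) - 1‖
      = 2 * |Real.sin (Real.pi * x)| := by
  have h : (2 * Real.pi * Complex.I * x : ℂ) = ((2 * Real.pi * x : ℝ) : ℂ) * Complex.I := by
    push_cast; ring
  rw [h, Complex.exp_mul_I, ← Complex.ofReal_cos, ← Complex.ofReal_sin]
  have h2 : ((Real.cos (2 * Real.pi * x) : ℂ) + (Real.sin (2 * Real.pi * x) : ℂ) * Complex.I - 1)
      = ((Real.cos (2 * Real.pi * x) - 1 : ℝ) : ℂ) + ((Real.sin (2 * Real.pi * x) : ℝ) : ℂ) * Complex.I := by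
    push_cast; ring
  rw [h2, Complex.norm_def, Complex.normSq_add_mul_I]
  have hc : Real.cos (2 * Real.pi * x) = 1 - 2 * Real.sin (Real.pi * x) ^ 2 := by
    have h0 : 2 * Real.pi * x = 2 * (Real.pi * x) := by ring
    rw [h0, Real.cos_two_mul]
    nlinarith [Real.sin_sq_add_cos_sq (Real.pi * x)]
  have : (Real.cos (2 * Real.pi * x) - 1) ^ 2 + Real.sin (2 * Real.pi * x) ^ 2
      = (2 * |Real.sin (Real.pi * x)|) ^ 2 := by
    have hs : Real.sin (2 * Real.pi * x) ^ 2 = 1 - Real.cos (2 * Real.pi * x) ^ 2 := by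
      nlinarith [Real.sin_sq_add_cos_sq (2 * Real.pi * x)]
    rw [hs, hc, mul_pow, sq_abs]; ring
  rw [this, Real.sqrt_sq (by positivity)]

theorem stmt_11 (τ : ℝ) (hτ : 2 < τ) (ξ : ℝ) (γ : ℝ) (hγ : 0 < γ)
    (hdio : ∀ p : ℤ, ∀ q : ℕ, 0 < q → γ * (q : ℝ) ^ (-τ) ≤ |ξ - p / q|)
    (p₀ : ℤ) (q₀ : ℕ) (hq₀ : 0 < q₀)
    (lam : ℂ) (hlam : lam = Complex.exp (2 * Real.pi * Complex.I * ((p₀ : ℝ) / q₀)))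
    (hlam1 : lam ≠ 1)
    (β : ℂ) (hβ : β = Complex.exp (2 * Real.pi * Complex.I * ξ)) :
    ∀ k : ℕ, 0 < k →
      1 / ‖β ^ k - lam‖ ≤ ((q₀ : ℝ) ^ τ / (4 * γ)) * (k : ℝ) ^ (τ - 1) := by
  intro k hk
  obtain ⟨r, hr⟩ : ∃ r : ℝ, r = (p₀ : ℝ) / q₀ := ⟨_, rfl⟩
  have hlamr : lam = Complex.exp (2 * Real.pi * Complex.I * (r : ℂ)) := by
    rw [hlam, hr]; norm_cast
  obtain ⟨p, hp⟩ : ∃ p : ℤ, p = round ((k : ℝ) * ξ - r) := ⟨_, rfl⟩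
  obtain ⟨t, ht⟩ : ∃ t : ℝ, t = (k : ℝ) * ξ - r - p := ⟨_, rfl⟩
  have hq₀R : (0 : ℝ) < q₀ := by exact_mod_cast hq₀
  have hkR : (0 : ℝ) < k := by exact_mod_cast hk
  -- |β^k - lam| = 2 |sin (π (kξ - r))|
  have hfac : β ^ k - lam
      = Complex.exp (2 * Real.pi * Complex.I * r) *
        (Complex.exp (2 * Real.pi * Complex.I * ((k : ℝ) * ξ - r)) - 1) := by
    rw [hβ, hlamr, ← Complex.exp_nat_mul, mul_sub, ← Complex.exp_add, mul_one]
    congr 2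
    all_goals push_cast; ring
  have habs : ‖β ^ k - lam‖ = 2 * |Real.sin (Real.pi * ((k : ℝ) * ξ - r))| := by
    rw [hfac, norm_mul, ← aux_abs_exp_sub_one]
    have : ‖Complex.exp (2 * Real.pi * Complex.I * r)‖ = 1 := by
      rw [Complex.norm_exp]
      norm_num [Complex.mul_re, Complex.mul_im]
    rw [this, one_mul]
    push_cast
    ring_nf
  -- reduce sin to t
  have hsin : |Real.sin (Real.pi * ((k : ℝ) * ξ - r))| = |Real.sin (Real.pi * t)| := by
    have : Real.pi * ((k : ℝ) * ξ - r) = Real.pi * t + p * Real.pi := by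
      rw [ht]; ring
    rw [this, Real.sin_add_int_mul_pi, abs_mul]
    rcases Int.even_or_odd p with hpar | hpar
    · rw [hpar.neg_one_zpow, abs_one, one_mul]
    · rw [hpar.neg_one_zpow, abs_neg, abs_one, one_mul]
  have ht12 : |t| ≤ 1 / 2 := by
    rw [ht, hp]; exact abs_sub_round _
  -- Jordan: |sin (π t)| ≥ 2 |t|
  have hjordan : 2 * |t| ≤ |Real.sin (Real.pi * t)| := by
    have h1 : |Real.pi * t| ≤ Real.pi / 2 := by
      rw [abs_mul, abs_of_pos Real.pi_pos]
      nlinarith [Real.pi_pos]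
    have := Real.mul_abs_le_abs_sin h1
    rw [abs_mul, abs_of_pos Real.pi_pos] at this
    have h2 : 2 / Real.pi * (Real.pi * |t|) = 2 * |t| := by
      field_simp
    linarith [h2 ▸ this]
  -- diophantine lower bound on |t|
  have hdt : γ * (q₀ : ℝ) ^ (-τ) * (k : ℝ) ^ (1 - τ) ≤ |t| := by
    have hqk : 0 < q₀ * k := Nat.mul_pos hq₀ hk
    have := hdio (p₀ + p * q₀) (q₀ * k) hqk
    have heq : ξ - ((p₀ + p * q₀ : ℤ) : ℝ) / ((q₀ * k : ℕ) : ℝ) = t / k := by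
      rw [ht, hr]
      push_cast
      field_simp
      ring
    rw [heq, abs_div, abs_of_pos hkR] at this
    have h3 : ((q₀ * k : ℕ) : ℝ) ^ (-τ) = (q₀ : ℝ) ^ (-τ) * (k : ℝ) ^ (-τ) := by
      push_cast
      rw [Real.mul_rpow hq₀R.le hkR.le]
    rw [h3] at this
    have h4 : γ * ((q₀ : ℝ) ^ (-τ) * (k : ℝ) ^ (-τ)) * k ≤ |t| :=
      (le_div_iff₀ hkR).mp this
    calc γ * (q₀ : ℝ) ^ (-τ) * (k : ℝ) ^ (1 - τ)
        = γ * ((q₀ : ℝ) ^ (-τ) * (k : ℝ) ^ (-τ)) * k := by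
          rw [show (1 : ℝ) - τ = 1 + (-τ) by ring, Real.rpow_add hkR, Real.rpow_one]; ring
      _ ≤ |t| := h4
  have hc : (0:ℝ) < 4 * (γ * (q₀:ℝ) ^ (-τ) * (k:ℝ) ^ (1 - τ)) := by positivity
  have hlow : 4 * (γ * (q₀:ℝ) ^ (-τ) * (k:ℝ) ^ (1 - τ)) ≤ ‖β ^ k - lam‖ := by
    rw [habs, hsin]
    linarith
  have h1 : 1 / ‖β ^ k - lam‖
      ≤ 1 / (4 * (γ * (q₀:ℝ) ^ (-τ) * (k:ℝ) ^ (1 - τ))) :=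
    one_div_le_one_div_of_le hc hlow
  refine h1.trans (le_of_eq ?_)
  rw [Real.rpow_neg hq₀R.le, show (1:ℝ) - τ = -(τ - 1) by ring, Real.rpow_neg hkR.le]
  have h2 : (0:ℝ) < (q₀:ℝ) ^ τ := Real.rpow_pos_of_pos hq₀R τ
  have h3 : (0:ℝ) < (k:ℝ) ^ (τ - 1) := Real.rpow_pos_of_pos hkR _
  field_simp
end

section
/- Let τ > 2 and ξ ∈ ℝ diophantine of order τ (∃ γ > 0: |ξ − p/q| ≥ γq^{−τ} for all p ∈ ℤ, q ∈ ℕ). Let β = e^{2πiξ} and λ = e^{2πir} with r ∈ ℚ and λ ≠ 1. Then limsup_{k→∞} (1/|β^k − λ|)^{1/k} ≤ 1, and consequently for every g ∈ Hol(𝔻) with g(z) = Σ aₙzⁿ, the series f(z) = Σ aₙ/(βⁿ − λ)·zⁿ defines an element of Hol(𝔻) satisfying f(βz) − λf(z) = g(z) on 𝔻. Hence λ is in the resolvent set of the composition operator C_φ f = f(β·) on Hol(𝔻). -/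
open Metric Filter

lemma aux_abs_exp (θ : ℝ) :
    ‖Complex.exp (θ * Complex.I) - 1‖ = 2 * |Real.sin (θ / 2)| := by
  rw [Complex.exp_mul_I]
  have h : Complex.cos θ + Complex.sin θ * Complex.I - 1
      = Complex.ofReal (Real.cos θ - 1) + Complex.ofReal (Real.sin θ) * Complex.I := by
    push_cast [Complex.ofReal_cos, Complex.ofReal_sin]; ring
  rw [h, Complex.norm_add_mul_I]
  have h2 : (Real.cos θ - 1) ^ 2 + Real.sin θ ^ 2 = (2 * |Real.sin (θ / 2)|) ^ 2 := by
    have hc : Real.cos θ = 2 * Real.cos (θ / 2) ^ 2 - 1 := by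
      rw [show θ = 2 * (θ/2) by ring, Real.cos_two_mul]; ring_nf
    have hs := Real.sin_sq_add_cos_sq (θ / 2)
    have habs : |Real.sin (θ / 2)| ^ 2 = Real.sin (θ / 2) ^ 2 := sq_abs _
    have hp := Real.sin_sq_add_cos_sq θ
    nlinarith [hc, hs, habs, hp]
  rw [h2, Real.sqrt_sq (by positivity)]

lemma aux_sin_lb (x : ℝ) :
    4 * |x - round x| ≤ ‖Complex.exp (2 * Real.pi * x * Complex.I) - 1‖ := by
  have hcast : (2 * (Real.pi:ℂ) * (x:ℂ) : ℂ) = ((2 * Real.pi * x : ℝ) : ℂ) := by push_cast; ring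
  rw [hcast, aux_abs_exp]
  have hd : 2 * Real.pi * x / 2 = Real.pi * x := by ring
  rw [hd]
  set m : ℤ := round x with hm
  set d : ℝ := x - m with hdd
  have hd2 : |d| ≤ 1 / 2 := abs_sub_round x
  have hx : Real.pi * x = Real.pi * d + m * Real.pi := by rw [hdd]; push_cast; ring
  rw [hx, Real.sin_add_int_mul_pi]
  have hone : |((-1:ℝ)) ^ m| = 1 := by
    rcases Int.even_or_odd m with he | ho
    · rw [he.neg_one_zpow]; simp
    · rw [ho.neg_one_zpow]; simp
  rw [abs_mul, hone, one_mul]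
  have h1 : |Real.sin (Real.pi * d)| = Real.sin (Real.pi * |d|) := by
    rcases abs_cases d with ⟨h, _⟩ | ⟨h, hneg⟩
    · rw [h, abs_of_nonneg]
      apply Real.sin_nonneg_of_nonneg_of_le_pi
      · positivity
      · nlinarith [Real.pi_pos, hd2, abs_nonneg d]
    · rw [h, mul_neg, Real.sin_neg, abs_of_nonpos]
      apply Real.sin_nonpos_of_nonpos_of_neg_pi_le
      · nlinarith [Real.pi_pos]
      · nlinarith [Real.pi_pos, hd2, abs_nonneg d, neg_abs_le d]
  rw [h1]
  have h2 : 2 / Real.pi * (Real.pi * |d|) ≤ Real.sin (Real.pi * |d|) := by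
    apply Real.mul_le_sin
    · positivity
    · nlinarith [Real.pi_pos, hd2]
  have hpi := Real.pi_ne_zero
  calc 4 * |d| = 2 * (2 / Real.pi * (Real.pi * |d|)) := by field_simp; ring
    _ ≤ 2 * Real.sin (Real.pi * |d|) := by linarith

lemma aux_summable (t : ℝ) (h0 : 0 ≤ t) (h1 : t < 1) (N : ℕ) :
    Summable (fun n : ℕ => ((n : ℝ) + 1) ^ N * t ^ n) := by
  have hs1 : Summable (fun n : ℕ => (2:ℝ) ^ N * ((n:ℝ) ^ N * t ^ n)) := by
    apply Summable.mul_left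
    exact summable_pow_mul_geometric_of_norm_lt_one N (by rwa [Real.norm_eq_abs, abs_of_nonneg h0])
  have hs2 : Summable (fun n : ℕ => (2:ℝ) ^ N * t ^ n) :=
    (summable_geometric_of_lt_one h0 h1).mul_left _
  refine Summable.of_nonneg_of_le (fun n => by positivity) ?_ (hs1.add hs2)
  · intro n
    have hb : ((n:ℝ) + 1) ^ N ≤ (2:ℝ) ^ N * ((n:ℝ) ^ N + 1) := by
      rcases Nat.eq_zero_or_pos n with h | h
      · subst h; simp
        rcases Nat.eq_zero_or_pos N with h' | h'
        · subst h'; norm_num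
        · rw [zero_pow h'.ne']; nlinarith [one_le_pow₀ (show (1:ℝ) ≤ 2 by norm_num) (n := N)]
      · have h2 : ((n:ℝ) + 1) ≤ 2 * (n:ℝ) := by
          have : (1:ℝ) ≤ (n:ℝ) := by exact_mod_cast h
          linarith
        calc ((n:ℝ) + 1) ^ N ≤ (2 * (n:ℝ)) ^ N := by
              apply pow_le_pow_left₀ (by positivity) h2
          _ = (2:ℝ) ^ N * (n:ℝ) ^ N := by rw [mul_pow]
          _ ≤ (2:ℝ) ^ N * ((n:ℝ) ^ N + 1) := by nlinarith [pow_pos (show (0:ℝ)<2 by norm_num) N]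
    have htn : (0:ℝ) ≤ t ^ n := by positivity
    calc ((n:ℝ) + 1) ^ N * t ^ n ≤ ((2:ℝ) ^ N * ((n:ℝ) ^ N + 1)) * t ^ n :=
          mul_le_mul_of_nonneg_right hb htn
      _ = (2:ℝ) ^ N * ((n:ℝ) ^ N * t ^ n) + (2:ℝ) ^ N * t ^ n := by ring

theorem stmt_12 (τ : ℝ) (hτ : 2 < τ) (ξ : ℝ) (γ : ℝ) (hγ : 0 < γ)
    (hdio : ∀ p : ℤ, ∀ q : ℕ, 0 < q → γ * (q : ℝ) ^ (-τ) ≤ |ξ - p / q|)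
    (r : ℚ)
    (lam : ℂ) (hlam : lam = Complex.exp (2 * Real.pi * Complex.I * (r : ℝ)))
    (hlam1 : lam ≠ 1)
    (β : ℂ) (hβ : β = Complex.exp (2 * Real.pi * Complex.I * ξ)) :
    Filter.limsup (fun k : ℕ => (1 / ‖β ^ k - lam‖) ^ ((1:ℝ)/k)) atTop ≤ 1 ∧
    ∀ (a : ℕ → ℂ) (g : ℂ → ℂ),
      (∀ z ∈ ball (0:ℂ) 1, HasSum (fun n : ℕ => a n * z ^ n) (g z)) →
      (DifferentiableOn ℂ (fun w : ℂ => ∑' n : ℕ, a n / (β ^ n - lam) * w ^ n)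
          (ball (0:ℂ) 1) ∧
        ∀ z ∈ ball (0:ℂ) 1,
          (∑' n : ℕ, a n / (β ^ n - lam) * (β * z) ^ n)
            - lam * (∑' n : ℕ, a n / (β ^ n - lam) * z ^ n) = g z) := by
  have hq0 : 0 < (r.den : ℝ) := by exact_mod_cast r.pos
  -- key lower bound
  have key : ∀ k : ℕ, 0 < k →
      4 * (γ * ((r.den : ℝ)) ^ (-τ) * (k : ℝ) ^ (1 - τ)) ≤ ‖β ^ k - lam‖ := by
    intro k hk
    have hkR : (0:ℝ) < (k:ℝ) := by exact_mod_cast hk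
    set x : ℝ := k * ξ - (r : ℝ) with hx
    have hfac : β ^ k - lam = lam * (Complex.exp (2 * Real.pi * x * Complex.I) - 1) := by
      rw [hβ, hlam, ← Complex.exp_nat_mul, mul_sub, mul_one, ← Complex.exp_add]
      congr 2
      push_cast [hx]; ring
    have hlamabs : ‖lam‖ = 1 := by
      rw [hlam, Complex.norm_exp]
      norm_num [Complex.mul_re, Complex.I_re, Complex.I_im]
    rw [hfac, norm_mul, hlamabs, one_mul]
    refine le_trans ?_ (aux_sin_lb x)
    have h4 : (0:ℝ) < 4 := by norm_num
    rw [mul_le_mul_iff_right₀ h4]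
    set m : ℤ := round x with hm
    have hq : 0 < k * r.den := Nat.mul_pos hk r.pos
    have hdio' := hdio (r.num + m * r.den) (k * r.den) hq
    have hrden : ((r.den:ℝ)) ≠ 0 := ne_of_gt hq0
    have hrepr : ((r.num + m * r.den : ℤ) : ℝ) / (((k * r.den : ℕ)) : ℝ) = ((r:ℝ) + m) / k := by
      push_cast
      rw [div_eq_div_iff (by positivity) (ne_of_gt hkR)]
      rw [Rat.cast_def]
      field_simp
    have h1 : |x - m| = k * |ξ - ((r.num + m * r.den : ℤ) : ℝ) / (((k * r.den : ℕ)) : ℝ)| := by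
      rw [hrepr, ← abs_of_pos hkR, ← abs_mul]
      congr 1
      field_simp [hx]
      rw [hx, abs_of_pos hkR]; ring
    have h2 : γ * (((k * r.den : ℕ)):ℝ) ^ (-τ) = γ * ((r.den:ℝ)) ^ (-τ) * (k:ℝ) ^ (-τ) := by
      push_cast
      rw [Real.mul_rpow (le_of_lt hkR) (le_of_lt hq0)]
      ring
    have h3 : (k:ℝ) * ((k:ℝ) ^ (-τ)) = (k:ℝ) ^ (1 - τ) := by
      rw [show (1 - τ) = 1 + (-τ) by ring, Real.rpow_add hkR, Real.rpow_one]
    calc γ * ((r.den:ℝ)) ^ (-τ) * (k:ℝ) ^ (1 - τ)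
        = (k:ℝ) * (γ * (((k * r.den : ℕ)):ℝ) ^ (-τ)) := by rw [h2, ← h3]; ring
      _ ≤ (k:ℝ) * |ξ - ((r.num + m * r.den : ℤ) : ℝ) / (((k * r.den : ℕ)) : ℝ)| := by
          exact mul_le_mul_of_nonneg_left hdio' (le_of_lt hkR)
      _ = |x - m| := h1.symm
  set C : ℝ := 4 * (γ * ((r.den : ℝ)) ^ (-τ)) with hCdef
  have hC : 0 < C := by positivity
  have hne : ∀ n : ℕ, β ^ n - lam ≠ 0 := by
    intro n
    rcases Nat.eq_zero_or_pos n with h | h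
    · subst h
      simpa [sub_ne_zero] using (Ne.symm hlam1)
    · have hpos : 0 < ‖β ^ n - lam‖ := by
        refine lt_of_lt_of_le ?_ (key n h)
        have : (0:ℝ) < (n:ℝ) := by exact_mod_cast h
        positivity
      intro h0
      rw [h0] at hpos
      simp at hpos
  have hub : ∀ k : ℕ, 0 < k →
      1 / ‖β ^ k - lam‖ ≤ C⁻¹ * (k:ℝ) ^ (τ - 1) := by
    intro k hk
    have hkR : (0:ℝ) < (k:ℝ) := by exact_mod_cast hk
    have hden : (0:ℝ) < C * (k:ℝ) ^ (1 - τ) := by positivity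
    have h1 : 1 / ‖β ^ k - lam‖ ≤ 1 / (C * (k:ℝ) ^ (1 - τ)) := by
      apply one_div_le_one_div_of_le hden
      simpa [hCdef, mul_assoc] using key k hk
    refine h1.trans_eq ?_
    rw [one_div, mul_inv, ← Real.rpow_neg (le_of_lt hkR), neg_sub]
  constructor
  · -- limsup part
    set v : ℕ → ℝ := fun k => Real.exp ((Real.log C⁻¹ + (τ - 1) * Real.log k) / k) with hv
    have hvt : Tendsto v atTop (nhds 1) := by
      have t1 : Tendsto (fun k : ℕ => Real.log C⁻¹ / k) atTop (nhds 0) :=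
        tendsto_const_div_atTop_nhds_zero_nat _
      have t2 : Tendsto (fun k : ℕ => Real.log k / k) atTop (nhds 0) := by
        have := (Real.isLittleO_log_id_atTop.comp_tendsto
          tendsto_natCast_atTop_atTop).tendsto_div_nhds_zero
        simpa using this
      have t3 : Tendsto (fun k : ℕ => (Real.log C⁻¹ + (τ - 1) * Real.log k) / k) atTop (nhds 0) := by
        have := t1.add (t2.const_mul (τ - 1))
        simp only [mul_zero, add_zero, zero_add] at this
        convert this using 2 with k
        ring
      have h4 := (Real.continuous_exp.tendsto 0).comp t3
      rw [Real.exp_zero] at h4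
      exact h4
    have hle : ∀ᶠ k : ℕ in atTop,
        (1 / ‖β ^ k - lam‖) ^ ((1:ℝ)/k) ≤ v k := by
      filter_upwards [eventually_ge_atTop 1] with k hk
      have hk0 : 0 < k := hk
      have hkR : (0:ℝ) < (k:ℝ) := by exact_mod_cast hk0
      have h1 : (1 / ‖β ^ k - lam‖) ^ ((1:ℝ)/k)
          ≤ (C⁻¹ * (k:ℝ) ^ (τ - 1)) ^ ((1:ℝ)/k) := by
        apply Real.rpow_le_rpow (by positivity) (hub k hk0) (by positivity)
      refine h1.trans_eq ?_
      rw [Real.rpow_def_of_pos (by positivity)]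
      congr 1
      rw [Real.log_mul (by positivity) (by positivity), Real.log_rpow hkR]
      field_simp
    calc Filter.limsup (fun k : ℕ => (1 / ‖β ^ k - lam‖) ^ ((1:ℝ)/k)) atTop
        ≤ Filter.limsup v atTop := by
          refine limsup_le_limsup hle ?_ ?_
          · exact isCoboundedUnder_le_of_le atTop (fun k => by positivity)
          · exact hvt.isBoundedUnder_le
      _ = 1 := hvt.limsup_eq
  · -- holomorphic solution part
    intro a g hg
    set b : ℕ → ℂ := fun n => a n / (β ^ n - lam) with hb
    set N : ℕ := ⌈τ⌉₊ with hN
    obtain ⟨K, hK0, hKb⟩ : ∃ K : ℝ, 0 < K ∧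
        ∀ n : ℕ, 1 / ‖β ^ n - lam‖ ≤ K * ((n:ℝ) + 1) ^ N := by
      refine ⟨max (1 / ‖1 - lam‖) C⁻¹, lt_max_of_lt_right (by positivity), ?_⟩
      intro n
      rcases Nat.eq_zero_or_pos n with h | h
      · subst h
        simpa using le_max_left (1 / ‖1 - lam‖) C⁻¹
      · have hkR : (0:ℝ) < (n:ℝ) := by exact_mod_cast h
        have h1 : (n:ℝ) ^ (τ - 1) ≤ ((n:ℝ) + 1) ^ (N:ℕ) := by
          have h2 : (n:ℝ) ^ (τ - 1) ≤ ((n:ℝ) + 1) ^ (τ - 1) :=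
            Real.rpow_le_rpow (le_of_lt hkR) (by linarith) (by linarith)
          have h3 : ((n:ℝ) + 1) ^ (τ - 1) ≤ ((n:ℝ) + 1) ^ ((N:ℕ):ℝ) := by
            apply Real.rpow_le_rpow_of_exponent_le (by linarith)
            have := Nat.le_ceil τ
            rw [hN]
            push_cast
            linarith [this]
          rw [Real.rpow_natCast] at h3
          linarith
        calc 1 / ‖β ^ n - lam‖ ≤ C⁻¹ * (n:ℝ) ^ (τ - 1) := hub n h
          _ ≤ C⁻¹ * ((n:ℝ) + 1) ^ N := by
              exact mul_le_mul_of_nonneg_left h1 (by positivity)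
          _ ≤ max (1 / ‖1 - lam‖) C⁻¹ * ((n:ℝ) + 1) ^ N := by
              apply mul_le_mul_of_nonneg_right (le_max_right _ _) (by positivity)
    -- summability of b against any radius < 1
    have habsβ : ‖β‖ = 1 := by
      rw [hβ, Complex.norm_exp]
      norm_num [Complex.mul_re, Complex.I_re, Complex.I_im]
    have hsum : ∀ ρ : ℝ, 0 ≤ ρ → ρ < 1 → Summable (fun n : ℕ => ‖b n‖ * ρ ^ n) := by
      intro ρ h0 h1
      set w : ℝ := (ρ + 1) / 2 with hw
      have hw0 : 0 < w := by rw [hw]; linarith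
      have hwρ : ρ < w := by rw [hw]; linarith
      have hw1 : w < 1 := by rw [hw]; linarith
      have hz : (w : ℂ) ∈ ball (0:ℂ) 1 := by
        rw [mem_ball_zero_iff]
        simpa [Complex.norm_real, abs_of_pos hw0] using hw1
      have hS : Summable (fun n : ℕ => a n * (w:ℂ) ^ n) := (hg _ hz).summable
      have hnorm : Tendsto (fun n : ℕ => ‖a n * (w:ℂ) ^ n‖) atTop (nhds 0) := by
        simpa using hS.tendsto_atTop_zero.norm
      obtain ⟨M, hM⟩ := hnorm.bddAbove_range
      rw [upperBounds] at hM
      have hM' : ∀ n : ℕ, ‖a n‖ * w ^ n ≤ M := by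
        intro n
        have := hM (Set.mem_range_self (f := fun n : ℕ => ‖a n * (w:ℂ) ^ n‖) n)
        simpa [norm_mul, norm_pow, Complex.norm_real, abs_of_pos hw0] using this
      set t : ℝ := ρ / w with ht
      have ht0 : 0 ≤ t := by positivity
      have ht1 : t < 1 := by rw [ht, div_lt_one hw0]; exact hwρ
      have hsummaj : Summable (fun n : ℕ => (K * M) * (((n:ℝ) + 1) ^ N * t ^ n)) :=
        (aux_summable t ht0 ht1 N).mul_left _
      refine Summable.of_nonneg_of_le (fun n => by positivity) ?_ hsummaj
      intro n
      have hMnn : 0 ≤ M := le_trans (by positivity) (hM' 0)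
      have hρ_eq : ρ ^ n = w ^ n * t ^ n := by
        have hwt : w * t = ρ := by rw [ht]; field_simp
        rw [← hwt, mul_pow]
      have hbn : ‖b n‖ = ‖a n‖ * (1 / ‖β ^ n - lam‖) := by
        rw [hb]
        simp [norm_div, div_eq_mul_inv, one_div]
      calc ‖b n‖ * ρ ^ n = ‖a n‖ * (1 / ‖β ^ n - lam‖) * ρ ^ n := by rw [hbn]
        _ ≤ ‖a n‖ * (K * ((n:ℝ) + 1) ^ N) * ρ ^ n := by
            apply mul_le_mul_of_nonneg_right _ (by positivity)
            exact mul_le_mul_of_nonneg_left (hKb n) (norm_nonneg _)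
        _ = (K * ((n:ℝ) + 1) ^ N) * (‖a n‖ * w ^ n) * t ^ n := by rw [hρ_eq]; ring
        _ ≤ (K * ((n:ℝ) + 1) ^ N) * M * t ^ n := by
            apply mul_le_mul_of_nonneg_right _ (by positivity)
            exact mul_le_mul_of_nonneg_left (hM' n) (by positivity)
        _ = (K * M) * (((n:ℝ) + 1) ^ N * t ^ n) := by ring
    constructor
    · -- differentiability
      intro z hz
      have hz1 : ‖z‖ < 1 := by rwa [mem_ball_zero_iff] at hz
      set ρ : ℝ := (‖z‖ + 1) / 2 with hρ
      have h0 : 0 ≤ ρ := by rw [hρ]; positivity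
      have h1 : ρ < 1 := by rw [hρ]; linarith
      have h2 : ‖z‖ < ρ := by rw [hρ]; linarith
      have hd : DifferentiableOn ℂ (fun w : ℂ => ∑' n : ℕ, b n * w ^ n) (ball (0:ℂ) ρ) := by
        apply Complex.differentiableOn_tsum_of_summable_norm (hsum ρ h0 h1)
        · intro n
          exact ((differentiable_const (b n)).mul (differentiable_pow n)).differentiableOn
        · exact isOpen_ball
        · intro n w hw
          rw [mem_ball_zero_iff] at hw
          rw [norm_mul, norm_pow]
          apply mul_le_mul_of_nonneg_left _ (norm_nonneg _)
          exact pow_le_pow_left₀ (norm_nonneg _) (le_of_lt hw) n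
      have hzmem : z ∈ ball (0:ℂ) ρ := by rwa [mem_ball_zero_iff]
      exact (hd.differentiableAt (isOpen_ball.mem_nhds hzmem)).differentiableWithinAt
    · -- functional equation
      intro z hz
      have hz1 : ‖z‖ < 1 := by rwa [mem_ball_zero_iff] at hz
      have hb1 : Summable (fun n : ℕ => b n * z ^ n) := by
        apply Summable.of_norm
        have : (fun n : ℕ => ‖b n * z ^ n‖) = fun n : ℕ => ‖b n‖ * (‖z‖) ^ n := by
          funext n; simp [norm_mul, norm_pow]
        rw [this]
        exact hsum _ (norm_nonneg z) hz1
      have hb2 : Summable (fun n : ℕ => b n * (β * z) ^ n) := by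
        apply Summable.of_norm
        have : (fun n : ℕ => ‖b n * (β * z) ^ n‖) = fun n : ℕ => ‖b n‖ * (‖z‖) ^ n := by
          funext n
          simp [norm_mul, norm_pow, map_mul, habsβ]
        rw [this]
        exact hsum _ (norm_nonneg z) hz1
      have e1 : ∀ n : ℕ, b n * (β * z) ^ n - lam * (b n * z ^ n) = a n * z ^ n := by
        intro n
        have h := hne n
        rw [hb]
        field_simp
        ring
      calc (∑' n : ℕ, b n * (β * z) ^ n) - lam * ∑' n : ℕ, b n * z ^ n
          = (∑' n : ℕ, b n * (β * z) ^ n) - ∑' n : ℕ, lam * (b n * z ^ n) := by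
            rw [tsum_mul_left]
        _ = ∑' n : ℕ, (b n * (β * z) ^ n - lam * (b n * z ^ n)) :=
            (Summable.tsum_sub hb2 (hb1.mul_left lam)).symm
        _ = ∑' n : ℕ, a n * z ^ n := tsum_congr e1
        _ = g z := (hg z hz).tsum_eq
end

section
/- Let β ∈ ℂ with |β| = 1, β^n ≠ 1 for all n ≥ 1, let m ∈ Hol(𝔻) with m(0) ≠ 0, and T f(z) = m(z)f(βz). Then for every n ∈ ℕ such that β^k ≠ 1 for k = 1,…,n, and every k ∈ {1,…,n}, the monomial e_k(z) = z^k does not belong to the range of the operator β^k m(0)·Id − T on Hol(𝔻). -/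
open Metric

theorem stmt_14 (β : ℂ) (hβ : ‖β‖ = 1)
    (haper : ∀ n : ℕ, 1 ≤ n → β ^ n ≠ 1)
    (m : ℂ → ℂ) (hm : DifferentiableOn ℂ m (ball (0:ℂ) 1))
    (hm0 : m 0 ≠ 0)
    (n : ℕ) (hn : ∀ k : ℕ, 1 ≤ k → k ≤ n → β ^ k ≠ 1) :
    ∀ k : ℕ, 1 ≤ k → k ≤ n →
      ¬ ∃ f : ℂ → ℂ, DifferentiableOn ℂ f (ball (0:ℂ) 1) ∧
        ∀ z ∈ ball (0:ℂ) 1, β ^ k * m 0 * f z - m z * f (β * z) = z ^ k := by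
  have h0 : (0:ℂ) ∈ ball (0:ℂ) 1 := mem_ball_self one_pos
  have hball : ball (0:ℂ) 1 ∈ nhds (0:ℂ) := isOpen_ball.mem_nhds h0
  have hβmem : ∀ z ∈ ball (0:ℂ) 1, β * z ∈ ball (0:ℂ) 1 := by
    intro z hz
    simp only [mem_ball, dist_zero_right] at hz ⊢
    calc ‖β * z‖ = ‖β‖ * ‖z‖ := norm_mul β z
      _ = ‖z‖ := by rw [hβ, one_mul]
      _ < 1 := hz
  have key : ∀ k : ℕ, ¬ ∃ f : ℂ → ℂ, DifferentiableOn ℂ f (ball (0:ℂ) 1) ∧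
      ∀ z ∈ ball (0:ℂ) 1, β ^ k * m 0 * f z - m z * f (β * z) = z ^ k := by
    intro k
    induction k with
    | zero =>
      rintro ⟨f, -, hfe⟩
      have := hfe 0 h0
      simp at this
    | succ k ih =>
      rintro ⟨f, hf, hfe⟩
      -- f 0 = 0
      have hf0 : f 0 = 0 := by
        have h1 := hfe 0 h0
        rw [mul_zero, zero_pow (Nat.succ_ne_zero k)] at h1
        have h2 : (β ^ (k+1) - 1) * (m 0 * f 0) = 0 := by ring_nf; linear_combination h1
        rcases mul_eq_zero.1 h2 with h3 | h3
        · exact absurd (sub_eq_zero.1 h3) (haper (k+1) (Nat.le_add_left 1 k))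
        · rcases mul_eq_zero.1 h3 with h4 | h4
          · exact absurd h4 hm0
          · exact h4
      set d : ℂ → ℂ := dslope f 0 with hd_def
      have hd : DifferentiableOn ℂ d (ball (0:ℂ) 1) :=
        (Complex.differentiableOn_dslope hball).mpr hf
      have hfd : ∀ z : ℂ, f z = z * d z := by
        intro z
        by_cases hz : z = 0
        · simp [hz, hf0]
        · rw [hd_def, dslope_of_ne f hz, slope_def_field, hf0]
          field_simp
          ring
      have hne0 : ∀ z ∈ ball (0:ℂ) 1, z ≠ 0 →
          β ^ k * m 0 * (β * d z) - m z * (β * d (β * z)) = z ^ k := by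
        intro z hz hz0
        have heq := hfe z hz
        rw [hfd z, hfd (β * z)] at heq
        apply mul_right_cancel₀ hz0
        calc (β ^ k * m 0 * (β * d z) - m z * (β * d (β * z))) * z
            = β ^ (k+1) * m 0 * (z * d z) - m z * (β * z * d (β * z)) := by ring
          _ = z ^ (k+1) := heq
          _ = z ^ k * z := by ring
      refine ih ⟨fun z => β * d z, ?_, ?_⟩
      · exact (hd.const_mul β)
      · intro z hz
        by_cases hz0 : z = 0
        · -- continuity argument
          subst hz0
          have hgc : ContinuousAt d 0 := (hd.differentiableAt hball).continuousAt
          have hgc2 : ContinuousAt (fun z => d (β * z)) 0 := by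
            have : ContinuousAt d (β * 0) := by rwa [mul_zero]
            exact this.comp (by fun_prop)
          have hmc : ContinuousAt m 0 := (hm.differentiableAt hball).continuousAt
          set h : ℂ → ℂ := fun z =>
            β ^ k * m 0 * (β * d z) - m z * (β * d (β * z)) - z ^ k with hh
          have hhc : ContinuousAt h 0 := by
            apply ContinuousAt.sub
            · exact (continuousAt_const.mul (hgc.const_mul β)).sub
                (hmc.mul (hgc2.const_mul β))
            · fun_prop
          have hzero : ∀ᶠ z in nhdsWithin 0 {(0:ℂ)}ᶜ, h z = 0 := by
            filter_upwards [self_mem_nhdsWithin,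
              mem_nhdsWithin_of_mem_nhds hball] with z hz1 hz2
            rw [hh]
            simp only [sub_eq_zero]
            exact hne0 z hz2 hz1
          have ht1 : Filter.Tendsto h (nhdsWithin 0 {(0:ℂ)}ᶜ) (nhds (h 0)) :=
            hhc.continuousWithinAt
          have ht2 : Filter.Tendsto h (nhdsWithin 0 {(0:ℂ)}ᶜ) (nhds 0) := by
            exact Filter.Tendsto.congr' (Filter.EventuallyEq.symm hzero)
              tendsto_const_nhds
          have h00 : h 0 = 0 := tendsto_nhds_unique ht1 ht2
          rw [hh] at h00
          simp only at h00 ⊢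
          linear_combination h00
        · exact hne0 z hz hz0
  exact fun k _ _ => key k
end

section
/- Let β ∈ ℂ with |β| = 1 and β^n ≠ 1 for all n ≥ 1, and let λ ∈ ℂ with 0 < |λ| < 1. Then there is no f ∈ Hol(𝔻) satisfying z·f(βz) − λ·f(z) = 1 for all z ∈ 𝔻. That is, λ lies in the spectrum of the operator Tf(z) = z·f(βz) on Hol(𝔻). -/
open Metric

theorem stmt_17 (β : ℂ) (hβ : ‖β‖ = 1)
    (haper : ∀ n : ℕ, 1 ≤ n → β ^ n ≠ 1)
    (lam : ℂ) (hlam0 : 0 < ‖lam‖) (hlam1 : ‖lam‖ < 1) :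
    ¬ ∃ f : ℂ → ℂ, DifferentiableOn ℂ f (ball (0:ℂ) 1) ∧
      ∀ z ∈ ball (0:ℂ) 1, z * f (β * z) - lam * f z = 1 := by
  rintro ⟨f, hf, heq⟩
  set κ : ℝ := ‖lam‖ with hκ
  have hκ0 : 0 < κ := hlam0
  have hκ1 : κ < 1 := hlam1
  have hβn : ‖β‖ = 1 := hβ
  have hlamn : ‖lam‖ = κ := rfl
  set Rr : ℝ := (2 + κ) / 3 with hRr
  have hRr0 : 0 < Rr := by positivity
  have hRr1 : Rr < 1 := by rw [hRr]; linarith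
  set R : NNReal := ⟨Rr, hRr0.le⟩ with hR
  have hRcoe : (R : ℝ) = Rr := rfl
  have hd : DifferentiableOn ℂ f (closedBall (0:ℂ) R) := by
    apply hf.mono
    intro x hx
    simp only [mem_closedBall, mem_ball] at hx ⊢
    calc dist x 0 ≤ (R : ℝ) := hx
      _ < 1 := by rw [hRcoe]; exact hRr1
  have hRpos : 0 < R := by exact_mod_cast hRr0
  obtain ⟨p, hp⟩ : ∃ p, HasFPowerSeriesOnBall f p 0 R :=
    ⟨_, hd.hasFPowerSeriesOnBall hRpos⟩
  set a : ℕ → ℂ := fun n => p.coeff n with ha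
  have hmem : ∀ w : ℂ, ‖w‖ < (R : ℝ) → w ∈ EMetric.ball (0:ℂ) (R : ENNReal) := by
    intro w hw
    show w ∈ Metric.eball (0:ℂ) (R : ENNReal)
    rw [mem_emetric_ball_zero_iff]
    exact_mod_cast (by exact_mod_cast hw : ‖w‖₊ < R)
  have hsum : ∀ w : ℂ, ‖w‖ < (R : ℝ) → HasSum (fun n => w ^ n • a n) (f w) := by
    intro w hw
    have := hp.hasSum (hmem w hw)
    simpa [FormalMultilinearSeries.apply_eq_pow_smul_coeff] using this
  -- the coefficient sequence of the identically-zero function  z*f(βz) - λ f z - 1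
  set b : ℕ → ℂ := fun n => match n with
    | 0 => lam * a 0 + 1
    | (m + 1) => lam * a (m + 1) - β ^ m * a m
    with hb
  have hqcoeff : ∀ n, (FormalMultilinearSeries.ofScalars ℂ b).coeff n = b n := by
    intro n
    show FormalMultilinearSeries.ofScalars ℂ b n (fun _ => 1) = b n
    rw [FormalMultilinearSeries.ofScalars_apply_eq]
    simp
  have hzero : HasFPowerSeriesAt (0 : ℂ → ℂ) (FormalMultilinearSeries.ofScalars ℂ b) 0 := by
    rw [hasFPowerSeriesAt_iff]
    filter_upwards [Metric.ball_mem_nhds (0:ℂ) hRr0] with z hz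
    rw [mem_ball_zero_iff] at hz
    rw [← hRcoe] at hz
    have hz1 : z ∈ ball (0:ℂ) 1 := by
      rw [mem_ball_zero_iff]
      exact hz.trans (by rw [hRcoe]; exact hRr1)
    have hβz : ‖β * z‖ < (R : ℝ) := by rw [norm_mul, hβn, one_mul]; exact hz
    have hS1 := hsum z hz
    have hS2 := hsum (β * z) hβz
    have hU : HasSum (fun n => lam * (z ^ n • a n)) (lam * f z) := hS1.mul_left lam
    have hV : HasSum (fun n => z * ((β * z) ^ n • a n)) (z * f (β * z)) := hS2.mul_left z
    have hU' : HasSum (fun n => lam * (z ^ (n + 1) • a (n + 1)))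
        (lam * f z - lam * (z ^ 0 • a 0)) := by
      have h := (hasSum_nat_add_iff' (f := fun n => lam * (z ^ n • a n)) 1).2 hU
      simpa using h
    have hW' : HasSum (fun n => z ^ (n + 1) • b (n + 1))
        (lam * f z - lam * (z ^ 0 • a 0) - z * f (β * z)) := by
      refine (hU'.sub hV).congr_fun fun n => ?_
      show z ^ (n + 1) • (lam * a (n + 1) - β ^ n * a n)
          = lam * (z ^ (n+1) • a (n+1)) - z * ((β * z) ^ n • a n)
      simp only [smul_eq_mul]
      ring
    have hW := (hasSum_nat_add_iff (f := fun n => z ^ n • b n) 1).1 hW'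
    have hsum0 : (∑ i ∈ Finset.range 1, z ^ i • b i) = lam * a 0 + 1 := by
      show (∑ i ∈ Finset.range 1, z ^ i • b i) = b 0
      simp
    rw [hsum0] at hW
    have h1 := heq z hz1
    have hzero' : lam * f z - lam * (z ^ 0 • a 0) - z * f (β * z) + (lam * a 0 + 1) = 0 := by
      simp only [pow_zero, one_smul, smul_eq_mul]
      linear_combination -h1
    rw [hzero'] at hW
    simp only [hqcoeff, Pi.zero_apply]
    exact hW
  have hq0 : (FormalMultilinearSeries.ofScalars ℂ b) = 0 := hzero.eq_zero
  have hb0 : ∀ n, b n = 0 := by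
    have := (FormalMultilinearSeries.ofScalars_series_eq_zero (𝕜 := ℂ) (E := ℂ)).1 hq0
    intro n; exact congrFun this n
  have hrec0 : lam * a 0 = -1 := by
    have h := hb0 0
    have h' : lam * a 0 + 1 = 0 := h
    linear_combination h'
  have hrecS : ∀ m, lam * a (m + 1) = β ^ m * a m := by
    intro m
    have h : lam * a (m + 1) - β ^ m * a m = 0 := hb0 (m + 1)
    linear_combination h
  -- norms of coefficients
  have han : ∀ n, ‖a n‖ = κ⁻¹ ^ (n + 1) := by
    intro n
    induction n with
    | zero =>
      have h := congrArg norm hrec0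
      rw [norm_mul, hlamn, norm_neg, norm_one] at h
      field_simp at h ⊢
      rw [zero_add, pow_one, eq_div_iff hκ0.ne']
      linarith
    | succ m ih =>
      have h := congrArg norm (hrecS m)
      rw [norm_mul, norm_mul, norm_pow, hβn, one_pow, one_mul, hlamn, ih] at h
      have : ‖a (m + 1)‖ = κ⁻¹ * κ⁻¹ ^ (m + 1) := by
        field_simp at h ⊢
        linarith
      rw [this, ← pow_succ']
  -- contradiction: coefficients grow too fast
  set t : ℝ := (1 + 2 * κ) / 3 with ht
  have htκ : κ ≤ t := by rw [ht]; linarith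
  have htR : t < (R : ℝ) := by rw [hRcoe, hRr, ht]; linarith
  have ht0 : 0 ≤ t := by positivity
  set y : ℂ := (t : ℂ) with hy
  have hyn : ‖y‖ = t := by
    rw [hy, Complex.norm_real, Real.norm_of_nonneg ht0]
  have hS := (hsum y (by rw [hyn]; exact htR)).summable.tendsto_atTop_zero
  have hSn : Filter.Tendsto (fun n => ‖y ^ n • a n‖) Filter.atTop (nhds 0) := by
    simpa using hS.norm
  have hev : ∀ᶠ n in Filter.atTop, ‖y ^ n • a n‖ < κ⁻¹ :=
    hSn.eventually_lt_const (by positivity)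
  obtain ⟨n, hn⟩ := hev.exists
  have hlow : κ⁻¹ ≤ ‖y ^ n • a n‖ := by
    rw [smul_eq_mul, norm_mul, norm_pow, hyn, han]
    have h1 : (1:ℝ) ≤ (t * κ⁻¹) ^ n := by
      apply one_le_pow₀
      rw [← div_eq_mul_inv]
      exact (one_le_div hκ0).2 htκ
    calc κ⁻¹ = 1 * κ⁻¹ := (one_mul _).symm
      _ ≤ (t * κ⁻¹) ^ n * κ⁻¹ := by
        apply mul_le_mul_of_nonneg_right h1 (by positivity)
      _ = t ^ n * κ⁻¹ ^ (n + 1) := by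
        rw [mul_pow, pow_succ]
        ring
  linarith
end
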